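/- For a rooted symmetric tree with all k_i ≥ 1 and r even with 2 ≤ r ≤ q, and any admissible sequence (x_1,...,x_{r-1}), the value (k_1 - x_1)h_2 - x_2 h_3 - ... - x_{r-1} h_r - (r-2)/2 is strictly positive and at most k_1 h_2 = h_1 - 1. -/
import Mathlib

/-- The `i`-th level vertex size of a rooted symmetric tree with `q` levels and
daughter degree sequence `k 1, …, k (q-1)`:
`h i = 1 + ∑_{j=i}^{q-1} k i * k (i+1) * ⋯ * k j`, so `h q = 1`. -/
def hlvl (q : ℕ) (k : ℕ → ℕ) (i : ℕ) : ℕ :=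
  1 + ∑ j ∈ Finset.Icc i (q - 1), ∏ t ∈ Finset.Icc i j, k t

lemma hlvl_pos (q : ℕ) (k : ℕ → ℕ) (i : ℕ) : 1 ≤ hlvl q k i := Nat.le_add_right 1 _

lemma hlvl_rec (q : ℕ) (k : ℕ → ℕ) {i : ℕ} (hi : 1 ≤ i) (h : i ≤ q - 1) :
    hlvl q k i = 1 + k i * hlvl q k (i + 1) := by
  have hicc : Finset.Icc i (q - 1) = insert i (Finset.Icc (i + 1) (q - 1)) := by
    ext t; simp [Finset.mem_Icc]; omega
  have hnot : i ∉ Finset.Icc (i + 1) (q - 1) := by simp [Finset.mem_Icc]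
  unfold hlvl
  rw [hicc, Finset.sum_insert hnot]
  have hprod : ∀ j ∈ Finset.Icc (i + 1) (q - 1),
      ∏ t ∈ Finset.Icc i j, k t = k i * ∏ t ∈ Finset.Icc (i + 1) j, k t := by
    intro j hj
    simp only [Finset.mem_Icc] at hj
    have : Finset.Icc i j = insert i (Finset.Icc (i + 1) j) := by
      ext t; simp [Finset.mem_Icc]; omega
    rw [this, Finset.prod_insert (by simp [Finset.mem_Icc])]
  rw [Finset.sum_congr rfl hprod, ← Finset.mul_sum]
  simp [Finset.Icc_self, mul_add]

lemma telescope (q : ℕ) (k : ℕ → ℕ) :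
    ∀ r : ℕ, 2 ≤ r → r ≤ q →
      ∑ i ∈ Finset.Icc 2 (r - 1), ((k i : ℤ) - 1) * hlvl q k (i + 1)
        = (hlvl q k 2 : ℤ) - hlvl q k r - (r - 2) := by
  intro r hr2
  induction r, hr2 using Nat.le_induction with
  | base => intro _; simp
  | succ r hr ih =>
    intro hq
    have h1 : (r + 1) - 1 = (r - 1) + 1 := by omega
    have h2 : (r - 1) + 1 = r := by omega
    rw [h1, Finset.sum_Icc_succ_top (by omega), h2, ih (by omega)]
    have hrec : hlvl q k r = 1 + k r * hlvl q k (r + 1) :=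
      hlvl_rec q k (by omega) (by omega)
    have : (hlvl q k r : ℤ) = 1 + (k r : ℤ) * hlvl q k (r + 1) := by
      rw [hrec]; push_cast; ring
    rw [this]; push_cast; ring

/-- For even `r` with `2 ≤ r ≤ q` and any admissible sequence, the even-level
label `(k 1 - x 1) h 2 - x 2 h 3 - ⋯ - x_{r-1} h r - (r-2)/2` is strictly
positive and at most `k 1 * h 2 = h 1 - 1`. -/
theorem even_label_bounds (q : ℕ) (k : ℕ → ℕ) (hk : ∀ i, 1 ≤ k i)
    (r : ℕ) (heven : Even r) (hr : 2 ≤ r) (hrq : r ≤ q)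
    (x : ℕ → ℕ) (hx : ∀ i ∈ Finset.Icc 1 (r - 1), x i ≤ k i - 1) :
    0 < ((k 1 : ℤ) - x 1) * hlvl q k 2
        - ∑ i ∈ Finset.Icc 2 (r - 1), (x i : ℤ) * hlvl q k (i + 1)
        - ((r - 2 : ℕ) / 2 : ℕ) ∧
    ((k 1 : ℤ) - x 1) * hlvl q k 2
        - ∑ i ∈ Finset.Icc 2 (r - 1), (x i : ℤ) * hlvl q k (i + 1)
        - ((r - 2 : ℕ) / 2 : ℕ) ≤ (k 1 : ℤ) * hlvl q k 2 ∧
    k 1 * hlvl q k 2 = hlvl q k 1 - 1 := by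
  have hx1 : x 1 ≤ k 1 - 1 := hx 1 (by simp [Finset.mem_Icc]; omega)
  have hk1 := hk 1
  have hx1' : (x 1 : ℤ) ≤ (k 1 : ℤ) - 1 := by
    have := hx1; omega
  have hhalf : 2 * ((r - 2) / 2) = r - 2 := by
    obtain ⟨m, hm⟩ := heven; omega
  refine ⟨?_, ?_, ?_⟩
  · -- positivity
    have hsum : ∑ i ∈ Finset.Icc 2 (r - 1), (x i : ℤ) * hlvl q k (i + 1)
        ≤ ∑ i ∈ Finset.Icc 2 (r - 1), ((k i : ℤ) - 1) * hlvl q k (i + 1) := by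
      apply Finset.sum_le_sum
      intro i hi
      have hxi : x i ≤ k i - 1 := by
        apply hx; simp only [Finset.mem_Icc] at hi ⊢; omega
      have hki := hk i
      have : (x i : ℤ) ≤ (k i : ℤ) - 1 := by omega
      have hpos : (0 : ℤ) ≤ hlvl q k (i + 1) := by positivity
      exact mul_le_mul_of_nonneg_right this hpos
    rw [telescope q k r hr hrq] at hsum
    have hh2 : (1 : ℤ) ≤ hlvl q k 2 := by exact_mod_cast hlvl_pos q k 2
    have hhr : (1 : ℤ) ≤ hlvl q k r := by exact_mod_cast hlvl_pos q k r
    have hfirst : (1 : ℤ) * hlvl q k 2 ≤ ((k 1 : ℤ) - x 1) * hlvl q k 2 :=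
      mul_le_mul_of_nonneg_right (by omega) (by omega)
    have hc : (2 : ℤ) * (((r - 2 : ℕ) / 2 : ℕ) : ℤ) = (r : ℤ) - 2 := by
      have := hhalf; push_cast; omega
    rw [one_mul] at hfirst
    linarith [hsum, hfirst, hhr, hc]
  · -- upper bound
    have hsum : 0 ≤ ∑ i ∈ Finset.Icc 2 (r - 1), (x i : ℤ) * hlvl q k (i + 1) := by
      apply Finset.sum_nonneg
      intro i _; positivity
    have hh2 : (0 : ℤ) ≤ hlvl q k 2 := by positivity
    have hx1nn : (0 : ℤ) ≤ x 1 := by positivity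
    nlinarith [mul_nonneg hx1nn hh2, Int.ofNat_nonneg ((r - 2) / 2)]
  · -- h1 - 1
    rw [hlvl_rec q k (i := 1) le_rfl (by omega), Nat.add_sub_cancel_left]
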